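/- For ε > 0 define ν_ε : (0,∞) → (0,∞) by ν_ε(t) = t·exp(−ε(t + 1/t)). Then ν_ε is C², ∫₀^∞ |ν_ε''(t)| dt < ∞ for every ε > 0, and limsup_{ε→0⁺} ∫₀^∞ |ν_ε''(t)| dt ≤ 2(1 + e^(−2)). -/

import Mathlib

open MeasureTheory Filter Set Topology

noncomputable def aF (ε t : ℝ) : ℝ := t * Real.exp (-(ε * (t + 1 / t)))
noncomputable def aF1 (ε t : ℝ) : ℝ := Real.exp (-(ε * (t + 1 / t))) * (1 - ε * (t - 1 / t))
noncomputable def aF2 (ε t : ℝ) : ℝ :=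
  -(ε * Real.exp (-(ε * (t + 1 / t))) * (2 - ε * ((t ^ 2 - 1) ^ 2 / t ^ 3)))

lemma hE (ε : ℝ) {t : ℝ} (ht : t ≠ 0) :
    HasDerivAt (fun t => Real.exp (-(ε * (t + 1 / t))))
      (Real.exp (-(ε * (t + 1 / t))) * (-(ε * (1 - 1 / t ^ 2)))) t := by
  have h1 : HasDerivAt (fun t : ℝ => t + 1 / t) (1 - 1 / t ^ 2) t := by
    have := (hasDerivAt_id' t).add (hasDerivAt_inv ht)
    simp only [one_div]
    exact this.congr_deriv (by ring)
  exact (((h1.const_mul ε).neg).exp)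

lemma hd1 (ε : ℝ) {t : ℝ} (ht : t ≠ 0) : HasDerivAt (aF ε) (aF1 ε t) t := by
  have := (hasDerivAt_id t).mul (hE ε ht)
  refine this.congr_deriv ?_
  simp only [id_eq]
  unfold aF1
  field_simp
  ring

lemma hd2 (ε : ℝ) {t : ℝ} (ht : t ≠ 0) : HasDerivAt (aF1 ε) (aF2 ε t) t := by
  have hu : HasDerivAt (fun t : ℝ => 1 - ε * (t - 1 / t)) (-(ε * (1 + 1 / t ^ 2))) t := by
    have h1 : HasDerivAt (fun t : ℝ => t - 1 / t) (1 + 1 / t ^ 2) t := by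
      have := (hasDerivAt_id' t).sub (hasDerivAt_inv ht)
      simp only [one_div]
      exact this.congr_deriv (by ring)
    simpa using ((h1.const_mul ε)).const_sub 1
  have := (hE ε ht).mul hu
  refine this.congr_deriv ?_
  unfold aF2
  field_simp
  ring

lemma texp {ε : ℝ} (hε : 0 < ε) : Tendsto (fun u : ℝ => Real.exp (-(ε * u))) atTop (𝓝 0) := by
  apply Real.tendsto_exp_atBot.comp
  exact tendsto_neg_atBot_iff.mpr (tendsto_const_mul_atTop_of_pos hε |>.mpr tendsto_id)

lemma tmulexp {ε : ℝ} (hε : 0 < ε) :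
    Tendsto (fun u : ℝ => u * Real.exp (-(ε * u))) atTop (𝓝 0) := by
  have h0 : Tendsto (fun x : ℝ => x * Real.exp (-x)) atTop (𝓝 0) := by
    simpa using Real.tendsto_pow_mul_exp_neg_atTop_nhds_zero 1
  have hcomp : Tendsto (fun u : ℝ => (ε * u) * Real.exp (-(ε * u))) atTop (𝓝 0) :=
    h0.comp (tendsto_const_mul_atTop_of_pos hε |>.mpr tendsto_id)
  have := hcomp.const_mul (1 / ε)
  simp only [mul_zero] at this
  refine this.congr fun u => ?_
  field_simp

lemma aF1_eq {ε t : ℝ} (ht : t ≠ 0) :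
    aF1 ε t = Real.exp (-(ε * t)) * Real.exp (-(ε * (1 / t))) * (1 - ε * t + ε * (1 / t)) := by
  unfold aF1
  rw [← Real.exp_add]
  ring_nf

lemma aF1_top {ε : ℝ} (hε : 0 < ε) : Tendsto (aF1 ε) atTop (𝓝 0) := by
  have h1 : Tendsto (fun t : ℝ => Real.exp (-(ε * (1 / t)))) atTop (𝓝 1) := by
    have : Tendsto (fun t : ℝ => -(ε * (1 / t))) atTop (𝓝 0) := by
      simpa using ((tendsto_inv_atTop_zero.const_mul ε).neg)
    simpa [Function.comp_def] using (Real.continuous_exp.tendsto 0).comp this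
  have h2 : Tendsto (fun t : ℝ => Real.exp (-(ε * t)) - ε * (t * Real.exp (-(ε * t)))
      + ε * ((1 / t) * Real.exp (-(ε * t)))) atTop (𝓝 0) := by
    have := ((texp hε).sub ((tmulexp hε).const_mul ε)).add
      (((tendsto_inv_atTop_zero.mul (texp hε))).const_mul ε)
    simpa using this.congr fun t => by simp [one_div]
  have := h1.mul h2
  simp only [one_mul, mul_zero] at this
  refine (this.congr' ?_)
  filter_upwards [eventually_gt_atTop (0 : ℝ)] with t ht
  rw [aF1_eq ht.ne']
  ring

lemma aF1_zero {ε : ℝ} (hε : 0 < ε) : Tendsto (aF1 ε) (𝓝[>] (0 : ℝ)) (𝓝 0) := by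
  have hinv : Tendsto (fun t : ℝ => 1 / t) (𝓝[>] (0 : ℝ)) atTop := by
    simpa [one_div] using tendsto_inv_nhdsGT_zero
  have h1 : Tendsto (fun t : ℝ => Real.exp (-(ε * t))) (𝓝[>] (0 : ℝ)) (𝓝 1) := by
    have : Tendsto (fun t : ℝ => -(ε * t)) (𝓝[>] (0 : ℝ)) (𝓝 0) := by
      have : Tendsto (fun t : ℝ => -(ε * t)) (𝓝 (0:ℝ)) (𝓝 (-(ε * 0))) :=
        ((continuous_const.mul continuous_id).neg).tendsto 0
      simpa using this.mono_left nhdsWithin_le_nhds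
    simpa [Function.comp_def] using (Real.continuous_exp.tendsto 0).comp this
  have h2 : Tendsto (fun t : ℝ => Real.exp (-(ε * (1 / t)))
      + ε * ((1 / t) * Real.exp (-(ε * (1 / t))))
      - ε * (t * Real.exp (-(ε * (1 / t))))) (𝓝[>] (0 : ℝ)) (𝓝 0) := by
    have hA : Tendsto (fun t : ℝ => Real.exp (-(ε * (1 / t)))) (𝓝[>] (0 : ℝ)) (𝓝 0) :=
      (texp hε).comp hinv
    have hB : Tendsto (fun t : ℝ => (1 / t) * Real.exp (-(ε * (1 / t)))) (𝓝[>] (0 : ℝ)) (𝓝 0) :=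
      (tmulexp hε).comp hinv
    have hC : Tendsto (fun t : ℝ => t) (𝓝[>] (0 : ℝ)) (𝓝 0) :=
      tendsto_id.mono_left nhdsWithin_le_nhds
    have := (hA.add (hB.const_mul ε)).sub ((hC.mul hA).const_mul ε)
    simpa using this
  have := h1.mul h2
  simp only [one_mul, mul_zero] at this
  refine this.congr' ?_
  filter_upwards [self_mem_nhdsWithin] with t ht
  rw [aF1_eq (ne_of_gt ht)]
  ring

noncomputable def aP (t : ℝ) : ℝ := (t ^ 2 - 1) ^ 2 / t ^ 3

lemma hdP {t : ℝ} (ht : t ≠ 0) :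
    HasDerivAt aP ((t ^ 2 + 3) * (t ^ 2 - 1) / t ^ 4) t := by
  have hnum : HasDerivAt (fun t : ℝ => (t ^ 2 - 1) ^ 2)
      (2 * (t ^ 2 - 1) ^ 1 * (2 * t ^ 1)) t :=
    (((hasDerivAt_pow 2 t).sub_const 1).pow 2).congr_deriv (by norm_num)
  have hden : HasDerivAt (fun t : ℝ => t ^ 3) (3 * t ^ 2) t := by
    simpa using hasDerivAt_pow 3 t
  have := hnum.div hden (pow_ne_zero 3 ht)
  refine this.congr_deriv ?_
  field_simp
  ring

lemma aP_anti : AntitoneOn aP (Set.Ioc (0 : ℝ) 1) := by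
  apply antitoneOn_of_deriv_nonpos (convex_Ioc (0 : ℝ) 1)
  · exact fun x hx => (hdP (ne_of_gt hx.1)).continuousAt.continuousWithinAt
  · intro x hx
    rw [interior_Ioc] at hx
    exact (hdP (ne_of_gt hx.1)).differentiableAt.differentiableWithinAt
  · intro x hx
    rw [interior_Ioc] at hx
    rw [(hdP (ne_of_gt hx.1)).deriv]
    apply div_nonpos_of_nonpos_of_nonneg
    · obtain ⟨ha, hb⟩ := hx
      have h1 : x ^ 2 ≤ 1 := by nlinarith
      nlinarith
    · positivity

lemma aP_mono : MonotoneOn aP (Set.Ici (1 : ℝ)) := by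
  apply monotoneOn_of_deriv_nonneg (convex_Ici (1 : ℝ))
  · intro x hx
    have hx0 : (0:ℝ) < x := lt_of_lt_of_le one_pos hx
    exact (hdP (ne_of_gt hx0)).continuousAt.continuousWithinAt
  · intro x hx
    rw [interior_Ici] at hx
    have hx0 : (0:ℝ) < x := lt_trans one_pos hx
    exact (hdP (ne_of_gt hx0)).differentiableAt.differentiableWithinAt
  · intro x hx
    rw [interior_Ici] at hx
    have hx1 : (1:ℝ) < x := hx
    have hx0 : (0:ℝ) < x := lt_trans one_pos hx1
    rw [(hdP (ne_of_gt hx0)).deriv]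
    apply div_nonneg _ (by positivity)
    have h1 : 1 ≤ x ^ 2 := by nlinarith
    nlinarith

lemma aP_contOn {s : Set ℝ} (hs : ∀ x ∈ s, x ≠ 0) : ContinuousOn aP s := by
  apply ContinuousOn.div
  · fun_prop
  · fun_prop
  · exact fun x hx => pow_ne_zero 3 (hs x hx)

lemma aP_one : aP 1 = 0 := by norm_num [aP]

lemma root_a {ε : ℝ} (hε : 0 < ε) : ∃ a : ℝ, 0 < a ∧ a ≤ 1 ∧ aP a = 2 / ε := by
  set c : ℝ := min (1 / 2) (ε / 4) with hcdef
  have hc0 : 0 < c := lt_min (by norm_num) (by positivity)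
  have hc2 : c ≤ 1 / 2 := min_le_left _ _
  have hc4 : c ≤ ε / 4 := min_le_right _ _
  have hc1 : c ≤ 1 := hc2.trans (by norm_num)
  have hpc : 2 / ε ≤ aP c := by
    rw [aP, div_le_div_iff₀ hε (by positivity)]
    have hcsq : c ^ 2 ≤ 1 / 4 := by nlinarith
    have hc3 : c ^ 3 ≤ ε / 4 := by
      have h := mul_le_mul_of_nonneg_right hcsq hc0.le
      nlinarith
    have h916 : (9:ℝ)/16 ≤ (c ^ 2 - 1) ^ 2 := by nlinarith
    nlinarith
  have hsub := intermediate_value_Icc' hc1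
    (aP_contOn fun x hx => ne_of_gt (lt_of_lt_of_le hc0 hx.1))
  have hmem : 2 / ε ∈ Set.Icc (aP 1) (aP c) := by
    rw [aP_one]
    exact ⟨by positivity, hpc⟩
  obtain ⟨a, haIcc, hpa⟩ := hsub hmem
  exact ⟨a, lt_of_lt_of_le hc0 haIcc.1, haIcc.2, hpa⟩

lemma root_b {ε : ℝ} (hε : 0 < ε) : ∃ b : ℝ, 1 < b ∧ 2 / ε ≤ b ∧ aP b = 2 / ε := by
  set d : ℝ := max 2 (8 / ε) with hddef
  have hd2 : (2:ℝ) ≤ d := le_max_left _ _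
  have hd8 : 8 / ε ≤ d := le_max_right _ _
  have hd0 : (0:ℝ) < d := lt_of_lt_of_le two_pos hd2
  have hεd : (8:ℝ) ≤ ε * d := by
    rw [div_le_iff₀ hε] at hd8
    linarith [hd8]
  have hpd : 2 / ε ≤ aP d := by
    rw [aP, div_le_div_iff₀ hε (by positivity)]
    have h1 : (3:ℝ)/4 * d ^ 2 ≤ d ^ 2 - 1 := by nlinarith
    have h2 : (9:ℝ)/16 * d ^ 4 ≤ (d ^ 2 - 1) ^ 2 := by nlinarith
    nlinarith [mul_le_mul_of_nonneg_left h2 hε.le,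
      mul_le_mul_of_nonneg_left hεd (by positivity : (0:ℝ) ≤ d ^ 3)]
  have hsub := intermediate_value_Icc (le_trans one_le_two hd2)
    (aP_contOn fun x hx => ne_of_gt (lt_of_lt_of_le one_pos hx.1))
  have hmem : 2 / ε ∈ Set.Icc (aP 1) (aP d) := by
    rw [aP_one]
    exact ⟨by positivity, hpd⟩
  obtain ⟨b, hbIcc, hpb⟩ := hsub hmem
  have hb1 : 1 < b := by
    rcases lt_or_eq_of_le hbIcc.1 with h | h
    · exact h
    · exfalso
      rw [← h, aP_one] at hpb
      have : (0:ℝ) < 2 / ε := by positivity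
      linarith [hpb, this]
  have hb0 : (0:ℝ) < b := lt_trans one_pos hb1
  refine ⟨b, hb1, ?_, hpb⟩
  have hlt : (b ^ 2 - 1) ^ 2 < b ^ 4 := by nlinarith
  have : aP b < b := by
    rw [aP, div_lt_iff₀ (by positivity : (0:ℝ) < b ^ 3)]
    nlinarith
  linarith [hpb ▸ this]

lemma aF2_nonneg {ε t : ℝ} (hε : 0 < ε) (h : 2 / ε ≤ aP t) : 0 ≤ aF2 ε t := by
  have h2 : 2 ≤ ε * aP t := by
    rw [div_le_iff₀ hε] at h
    linarith
  rw [aF2, ← aP, neg_nonneg]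
  apply mul_nonpos_of_nonneg_of_nonpos (by positivity)
  linarith

lemma aF2_nonpos {ε t : ℝ} (hε : 0 < ε) (h : aP t ≤ 2 / ε) : aF2 ε t ≤ 0 := by
  have h2 : ε * aP t ≤ 2 := by
    rw [le_div_iff₀ hε] at h
    linarith
  rw [aF2, ← aP, neg_nonpos]
  apply mul_nonneg (by positivity)
  linarith

lemma bound_a {ε a : ℝ} (hε : 0 < ε) (ha0 : 0 < a) (ha1 : a ≤ 1) : aF1 ε a ≤ 1 := by
  have hinv : 1 ≤ 1 / a := by
    rw [le_div_iff₀ ha0]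
    linarith
  have h3 : 0 ≤ 1 - ε * (a - 1 / a) := by
    have : a - 1 / a ≤ 0 := by linarith
    nlinarith
  have h1 : 1 - ε * (a - 1 / a) ≤ 1 + ε * (1 / a) := by nlinarith
  have h2 : Real.exp (-(ε * (a + 1 / a))) ≤ Real.exp (-(ε * (1 / a))) := by
    apply Real.exp_le_exp.mpr
    nlinarith
  have step : aF1 ε a ≤ Real.exp (-(ε * (1 / a))) * (1 + ε * (1 / a)) := by
    rw [aF1]
    exact mul_le_mul h2 h1 h3 (Real.exp_nonneg _)
  have h4 : Real.exp (-(ε * (1 / a))) * (1 + ε * (1 / a)) ≤ 1 := by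
    have h5 := Real.add_one_le_exp (ε * (1 / a))
    have h6 : Real.exp (-(ε * (1 / a))) * (1 + ε * (1 / a)) ≤
        Real.exp (-(ε * (1 / a))) * Real.exp (ε * (1 / a)) :=
      mul_le_mul_of_nonneg_left (by linarith) (Real.exp_nonneg _)
    rwa [← Real.exp_add, neg_add_cancel, Real.exp_zero] at h6
  linarith

lemma bound_b {ε b : ℝ} (hε : 0 < ε) (hε2 : ε < 2) (hb1 : 1 < b) (hb2 : 2 / ε ≤ b)
    (hpb : aP b = 2 / ε) :
    -aF1 ε b ≤ Real.exp (-2) * ((4 + ε ^ 2) / (4 - ε ^ 2)) := by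
  have hb0 : (0:ℝ) < b := lt_trans one_pos hb1
  have hbb : (0:ℝ) < b ^ 2 - 1 := by nlinarith
  have hεb : (2:ℝ) ≤ ε * b := by
    rw [div_le_iff₀ hε] at hb2
    linarith
  have hkey : ε * (b ^ 2 - 1) ^ 2 = 2 * b ^ 3 := by
    rw [aP] at hpb
    field_simp at hpb
    linarith
  have hq : ε * (b - 1 / b) = 2 * b ^ 2 / (b ^ 2 - 1) := by
    rw [eq_div_iff (ne_of_gt hbb)]
    have hb3 : b ^ 3 = b * b ^ 2 := by ring
    field_simp
    nlinarith [hkey]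
  have hexp : 2 ≤ ε * (b + 1 / b) := by
    have h1 : (2:ℝ) ≤ 2 * b ^ 2 / (b ^ 2 - 1) := by
      rw [le_div_iff₀ hbb]
      nlinarith
    have h2 : ε * (b - 1 / b) ≤ ε * (b + 1 / b) := by
      have : (0:ℝ) < 1 / b := by positivity
      nlinarith
    linarith [hq ▸ h1]
  have hE : Real.exp (-(ε * (b + 1 / b))) ≤ Real.exp (-2) := by
    apply Real.exp_le_exp.mpr
    linarith
  have hfrac : 2 * b ^ 2 / (b ^ 2 - 1) - 1 = (b ^ 2 + 1) / (b ^ 2 - 1) := by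
    field_simp
    ring
  have h4ε : (0:ℝ) < 4 - ε ^ 2 := by nlinarith
  have hineq : (b ^ 2 + 1) / (b ^ 2 - 1) ≤ (4 + ε ^ 2) / (4 - ε ^ 2) := by
    rw [div_le_div_iff₀ hbb h4ε]
    nlinarith [hεb, mul_le_mul hεb hεb (by norm_num) (by positivity : (0:ℝ) ≤ ε * b)]
  calc -aF1 ε b = Real.exp (-(ε * (b + 1 / b))) * (ε * (b - 1 / b) - 1) := by
        rw [aF1]; ring
    _ = Real.exp (-(ε * (b + 1 / b))) * ((b ^ 2 + 1) / (b ^ 2 - 1)) := by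
        rw [hq, hfrac]
    _ ≤ Real.exp (-2) * ((4 + ε ^ 2) / (4 - ε ^ 2)) :=
        mul_le_mul hE hineq (div_nonneg (by positivity) hbb.le) (Real.exp_nonneg _)

lemma cube_exp_bound {u : ℝ} (hu : 0 ≤ u) : u ^ 3 * Real.exp (-u) ≤ 27 := by
  have h := Real.add_one_le_exp (u / 3)
  have h1 : u / 3 ≤ Real.exp (u / 3) := by linarith
  have h2 : (u / 3) ^ 3 ≤ Real.exp (u / 3) ^ 3 :=
    pow_le_pow_left₀ (by positivity) h1 3
  have h3 : Real.exp (u / 3) ^ 3 = Real.exp u := by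
    rw [← Real.exp_nat_mul]
    congr 1
    push_cast
    ring
  have h4 : u ^ 3 ≤ 27 * Real.exp u := by
    rw [h3] at h2
    nlinarith [h2]
  have h5 := mul_le_mul_of_nonneg_right h4 (Real.exp_nonneg (-u))
  calc u ^ 3 * Real.exp (-u) ≤ 27 * Real.exp u * Real.exp (-u) := h5
    _ = 27 := by rw [mul_assoc, ← Real.exp_add, add_neg_cancel, Real.exp_zero, mul_one]

lemma aF2_bdd {ε t : ℝ} (hε : 0 < ε) (ht0 : 0 < t) (ht1 : t ≤ 1) :
    |aF2 ε t| ≤ 2 * ε + 27 / ε := by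
  have hP0 : 0 ≤ aP t := div_nonneg (sq_nonneg _) (by positivity)
  have hE0 := Real.exp_nonneg (-(ε * (t + 1 / t)))
  have hE1 : Real.exp (-(ε * (t + 1 / t))) ≤ 1 := by
    apply Real.exp_le_one_iff.mpr
    have : 0 ≤ ε * (t + 1 / t) := by positivity
    linarith
  have habs : |aF2 ε t| = ε * Real.exp (-(ε * (t + 1 / t))) * |2 - ε * aP t| := by
    rw [aF2, ← aP, abs_neg, abs_mul, abs_mul, abs_of_pos hε,
      abs_of_pos (Real.exp_pos _)]
  have h1 : |2 - ε * aP t| ≤ 2 + ε * aP t := by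
    rw [abs_le]
    constructor <;> nlinarith [mul_nonneg hε.le hP0]
  have hsplit : |aF2 ε t| ≤ ε * Real.exp (-(ε * (t + 1 / t))) * (2 + ε * aP t) := by
    rw [habs]
    exact mul_le_mul_of_nonneg_left h1 (by positivity)
  have hterm1 : ε * Real.exp (-(ε * (t + 1 / t))) * 2 ≤ 2 * ε := by nlinarith
  -- second term
  have hEle : Real.exp (-(ε * (t + 1 / t))) ≤ Real.exp (-(ε * (1 / t))) := by
    apply Real.exp_le_exp.mpr
    have : 0 ≤ ε * t := by positivity
    nlinarith
  have hPle : aP t ≤ (1 / t) ^ 3 := by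
    have ht2 : t ^ 2 ≤ 1 := by nlinarith
    have hnum : (t ^ 2 - 1) ^ 2 ≤ 1 := by nlinarith [sq_nonneg t]
    have heq : (1:ℝ) / t ^ 3 = (1 / t) ^ 3 := by field_simp
    rw [aP, ← heq]
    gcongr
  have hterm2 : ε * Real.exp (-(ε * (t + 1 / t))) * (ε * aP t) ≤ 27 / ε := by
    have hstep : ε * Real.exp (-(ε * (t + 1 / t))) * (ε * aP t) ≤
        ε * (Real.exp (-(ε * (1 / t))) * (ε * (1 / t) ^ 3)) := by
      have hmm := mul_le_mul hEle (mul_le_mul_of_nonneg_left hPle hε.le)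
        (by positivity) (Real.exp_nonneg _)
      have := mul_le_mul_of_nonneg_left hmm hε.le
      linarith [this]
    have hrw : ε * (Real.exp (-(ε * (1 / t))) * (ε * (1 / t) ^ 3)) =
        ((ε * (1 / t)) ^ 3 * Real.exp (-(ε * (1 / t)))) / ε := by
      field_simp
    have hcube := cube_exp_bound (by positivity : (0:ℝ) ≤ ε * (1 / t))
    have : ((ε * (1 / t)) ^ 3 * Real.exp (-(ε * (1 / t)))) / ε ≤ 27 / ε := by
      apply div_le_div_of_nonneg_right hcube hε.le
    linarith [hstep, hrw ▸ this]
  calc |aF2 ε t| ≤ ε * Real.exp (-(ε * (t + 1 / t))) * (2 + ε * aP t) := hsplit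
    _ = ε * Real.exp (-(ε * (t + 1 / t))) * 2
        + ε * Real.exp (-(ε * (t + 1 / t))) * (ε * aP t) := by ring
    _ ≤ 2 * ε + 27 / ε := add_le_add hterm1 hterm2

lemma aF2_contOn {ε : ℝ} {s : Set ℝ} (hs : ∀ x ∈ s, x ≠ 0) : ContinuousOn (aF2 ε) s := by
  unfold aF2
  have h1 : ContinuousOn (fun t : ℝ => Real.exp (-(ε * (t + 1 / t)))) s := by
    apply Real.continuous_exp.comp_continuousOn
    apply ContinuousOn.neg
    apply ContinuousOn.mul continuousOn_const
    exact continuousOn_id.add (continuousOn_const.div continuousOn_id hs)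
  have h2 := aP_contOn (s := s) hs
  apply ContinuousOn.neg
  exact (continuousOn_const.mul h1).mul (continuousOn_const.sub (continuousOn_const.mul h2))

lemma key {ε : ℝ} (hε : 0 < ε) :
    IntegrableOn (aF2 ε) (Set.Ioi (0:ℝ)) ∧
    (ε < 2 → ∫ t in Set.Ioi (0:ℝ), |aF2 ε t| ≤
      2 + 2 * (Real.exp (-2) * ((4 + ε ^ 2) / (4 - ε ^ 2)))) := by
  obtain ⟨a, ha0, ha1, hpa⟩ := root_a hε
  obtain ⟨b, hb1, hb2, hpb⟩ := root_b hε
  have hab : a < b := lt_of_le_of_lt ha1 hb1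
  have hb0 : (0:ℝ) < b := lt_trans one_pos hb1
  -- signs
  have hsign1 : ∀ t ∈ Set.Ioc (0:ℝ) a, 0 ≤ aF2 ε t := by
    intro t ht
    apply aF2_nonneg hε
    rw [← hpa]
    exact aP_anti ⟨ht.1, le_trans ht.2 ha1⟩ ⟨ha0, ha1⟩ ht.2
  have hsign2 : ∀ t ∈ Set.Ioc a b, aF2 ε t ≤ 0 := by
    intro t ht
    apply aF2_nonpos hε
    rcases le_or_gt t 1 with h | h
    · rw [← hpa]
      exact aP_anti ⟨ha0, ha1⟩ ⟨lt_of_lt_of_le ha0 ht.1.le, h⟩ ht.1.le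
    · rw [← hpb]
      exact aP_mono h.le hb1.le ht.2
  have hsign3 : ∀ t ∈ Set.Ioi b, 0 ≤ aF2 ε t := by
    intro t ht
    apply aF2_nonneg hε
    rw [← hpb]
    exact aP_mono hb1.le (le_trans hb1.le ht.out.le) ht.out.le
  -- integrability on (0, a]
  have hIa : IntegrableOn (aF2 ε) (Set.Ioc (0:ℝ) a) := by
    have hmeas : AEStronglyMeasurable (aF2 ε) (volume.restrict (Set.Ioc (0:ℝ) a)) :=
      (aF2_contOn fun x hx => ne_of_gt hx.1).aestronglyMeasurable measurableSet_Ioc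
    apply Integrable.mono' (integrableOn_const (C := 2 * ε + 27 / ε) measure_Ioc_lt_top.ne) hmeas
    filter_upwards [ae_restrict_mem measurableSet_Ioc] with t ht
    exact (aF2_bdd hε ht.1 (le_trans ht.2 ha1))
  -- integrability on (a, b]
  have hIab : IntegrableOn (aF2 ε) (Set.Ioc a b) :=
    ((aF2_contOn (fun x (hx : x ∈ Set.Icc a b) =>
      ne_of_gt (lt_of_lt_of_le ha0 hx.1))).integrableOn_Icc).mono_set
      Set.Ioc_subset_Icc_self
  -- integrability on (b, ∞)
  have hIb : IntegrableOn (aF2 ε) (Set.Ioi b) :=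
    integrableOn_Ioi_deriv_of_nonneg' (fun x hx => hd2 ε (ne_of_gt (lt_of_lt_of_le hb0 hx)))
      hsign3 (aF1_top hε)
  have hIob : IntegrableOn (aF2 ε) (Set.Ioc (0:ℝ) b) := by
    rw [← Set.Ioc_union_Ioc_eq_Ioc ha0.le hab.le]
    exact hIa.union hIab
  have hIoi : IntegrableOn (aF2 ε) (Set.Ioi (0:ℝ)) := by
    rw [← Set.Ioc_union_Ioi_eq_Ioi hb0.le]
    exact hIob.union hIb
  refine ⟨hIoi, fun hε2 => ?_⟩
  -- FTC values
  have hfa : ∫ t in Set.Ioc (0:ℝ) a, aF2 ε t = aF1 ε a - 0 := by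
    rw [← intervalIntegral.integral_of_le ha0.le]
    apply intervalIntegral.integral_eq_sub_of_hasDerivAt_of_tendsto ha0
      (fun x hx => hd2 ε (ne_of_gt hx.1))
      ((intervalIntegrable_iff_integrableOn_Ioc_of_le ha0.le).mpr hIa)
      (aF1_zero hε)
      (((hd2 ε (ne_of_gt ha0)).continuousAt.tendsto).mono_left nhdsWithin_le_nhds)
  have hfab : ∫ t in Set.Ioc a b, aF2 ε t = aF1 ε b - aF1 ε a := by
    rw [← intervalIntegral.integral_of_le hab.le]
    apply intervalIntegral.integral_eq_sub_of_hasDerivAt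
    · intro x hx
      rw [Set.uIcc_of_le hab.le] at hx
      exact hd2 ε (ne_of_gt (lt_of_lt_of_le ha0 hx.1))
    · exact (intervalIntegrable_iff_integrableOn_Ioc_of_le hab.le).mpr hIab
  have hfb : ∫ t in Set.Ioi b, aF2 ε t = 0 - aF1 ε b :=
    integral_Ioi_of_hasDerivAt_of_nonneg'
      (fun x hx => hd2 ε (ne_of_gt (lt_of_lt_of_le hb0 hx))) hsign3 (aF1_top hε)
  -- abs integrals on pieces
  have habs1 : ∫ t in Set.Ioc (0:ℝ) a, |aF2 ε t| = ∫ t in Set.Ioc (0:ℝ) a, aF2 ε t :=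
    setIntegral_congr_fun measurableSet_Ioc fun t ht => abs_of_nonneg (hsign1 t ht)
  have habs2 : ∫ t in Set.Ioc a b, |aF2 ε t| = ∫ t in Set.Ioc a b, -aF2 ε t :=
    setIntegral_congr_fun measurableSet_Ioc fun t ht => abs_of_nonpos (hsign2 t ht)
  have habs3 : ∫ t in Set.Ioi b, |aF2 ε t| = ∫ t in Set.Ioi b, aF2 ε t :=
    setIntegral_congr_fun measurableSet_Ioi fun t ht => abs_of_nonneg (hsign3 t ht)
  -- splitting
  have hsplit : ∫ t in Set.Ioi (0:ℝ), |aF2 ε t| =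
      (∫ t in Set.Ioc (0:ℝ) a, |aF2 ε t|) + (∫ t in Set.Ioc a b, |aF2 ε t|)
      + ∫ t in Set.Ioi b, |aF2 ε t| := by
    rw [← Set.Ioc_union_Ioi_eq_Ioi hb0.le,
      setIntegral_union Set.Ioc_disjoint_Ioi_same measurableSet_Ioi hIob.abs hIb.abs,
      ← Set.Ioc_union_Ioc_eq_Ioc ha0.le hab.le,
      setIntegral_union (Set.Ioc_disjoint_Ioc_of_le le_rfl) measurableSet_Ioc hIa.abs hIab.abs]
  have hneg : ∫ t in Set.Ioc a b, -aF2 ε t = -(aF1 ε b - aF1 ε a) := by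
    rw [integral_neg, hfab]
  have hba := bound_a hε ha0 ha1
  have hbb := bound_b hε hε2 hb1 hb2 hpb
  rw [hsplit, habs1, habs2, habs3, hfa, hneg, hfb]
  linarith

theorem stmt_12 (ν : ℝ → ℝ → ℝ)
    (hν : ∀ ε t : ℝ, ν ε t = t * Real.exp (-(ε * (t + 1 / t)))) :
    (∀ ε : ℝ, 0 < ε → ContDiffOn ℝ 2 (ν ε) (Set.Ioi (0 : ℝ))) ∧
    (∀ ε : ℝ, 0 < ε →
      IntegrableOn (fun t => |deriv (deriv (ν ε)) t|) (Set.Ioi (0 : ℝ))) ∧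
    limsup (fun ε : ℝ => ∫ t in Set.Ioi (0 : ℝ), |deriv (deriv (ν ε)) t|)
        (nhdsWithin 0 (Set.Ioi (0 : ℝ))) ≤ 2 * (1 + Real.exp (-2)) := by
  have hfun : ∀ ε : ℝ, ν ε = aF ε := fun ε => funext (hν ε)
  have hdd : ∀ ε : ℝ, ∀ t : ℝ, t ≠ 0 → deriv (deriv (aF ε)) t = aF2 ε t := by
    intro ε t ht
    have h1 : deriv (aF ε) =ᶠ[nhds t] aF1 ε := by
      filter_upwards [isOpen_compl_singleton.mem_nhds ht] with x hx
      exact (hd1 ε hx).deriv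
    rw [h1.deriv_eq, (hd2 ε ht).deriv]
  refine ⟨?_, ?_, ?_⟩
  · -- smoothness
    intro ε hε
    rw [hfun]
    have h1 : ContDiffOn ℝ 2 (fun t : ℝ => 1 / t) (Set.Ioi (0:ℝ)) := by
      simp only [one_div]
      exact ContDiffOn.mono (contDiffOn_inv ℝ) fun x hx => ne_of_gt (hx : (0:ℝ) < x)
    have h2 : ContDiffOn ℝ 2 (fun t : ℝ => -(ε * (t + 1 / t))) (Set.Ioi (0:ℝ)) :=
      ((contDiffOn_const.mul (contDiffOn_id.add h1))).neg
    have h3 : ContDiffOn ℝ 2 (fun t : ℝ => Real.exp (-(ε * (t + 1 / t)))) (Set.Ioi (0:ℝ)) :=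
      Real.contDiff_exp.comp_contDiffOn h2
    exact contDiffOn_id.mul h3
  · -- integrability
    intro ε hε
    rw [hfun]
    apply IntegrableOn.congr_fun ((key hε).1.abs) ?_ measurableSet_Ioi
    intro t ht
    simp only [hdd ε t (ne_of_gt ht)]
  · -- limsup
    set G : ℝ → ℝ := fun ε => 2 + 2 * (Real.exp (-2) * ((4 + ε ^ 2) / (4 - ε ^ 2))) with hGdef
    set F : ℝ → ℝ := fun ε => ∫ t in Set.Ioi (0 : ℝ), |deriv (deriv (ν ε)) t| with hFdef
    have hFG : ∀ᶠ ε in nhdsWithin 0 (Set.Ioi (0:ℝ)), F ε ≤ G ε := by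
      filter_upwards [Ioo_mem_nhdsGT_of_mem (Set.left_mem_Ico.mpr two_pos)] with ε hε
      have heq : F ε = ∫ t in Set.Ioi (0:ℝ), |aF2 ε t| := by
        rw [hFdef]
        simp only [hfun]
        apply setIntegral_congr_fun measurableSet_Ioi
        intro t ht
        simp only [hdd ε t (ne_of_gt ht)]
      rw [heq]
      exact (key hε.1).2 hε.2
    have hF0 : ∀ᶠ ε in nhdsWithin 0 (Set.Ioi (0:ℝ)), (0:ℝ) ≤ F ε :=
      Eventually.of_forall fun ε => integral_nonneg fun t => abs_nonneg _
    have hGt : Tendsto G (nhdsWithin 0 (Set.Ioi (0:ℝ))) (𝓝 (G 0)) := by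
      have hc : ContinuousAt G 0 := by
        apply ContinuousAt.add continuousAt_const
        apply ContinuousAt.mul continuousAt_const
        apply ContinuousAt.mul continuousAt_const
        apply ContinuousAt.div (by fun_prop) (by fun_prop)
        norm_num
      exact hc.continuousWithinAt
    have h1 : limsup F (nhdsWithin 0 (Set.Ioi (0:ℝ))) ≤ limsup G (nhdsWithin 0 (Set.Ioi (0:ℝ))) :=
      limsup_le_limsup hFG (isCoboundedUnder_le_of_eventually_le _ hF0)
        hGt.isBoundedUnder_le
    have h2 : limsup G (nhdsWithin 0 (Set.Ioi (0:ℝ))) = G 0 := hGt.limsup_eq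
    have h3 : G 0 = 2 * (1 + Real.exp (-2)) := by
      rw [hGdef]
      norm_num
      ring
    rw [h2, h3] at h1
    exact h1
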